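/- Let p(z,w) be a stable polynomial of degree (n,m), written p(z,w) = Σ_{i=0}^m p_i(z) w^i. Then for every z on the unit circle, the m×m matrix T_m(z) = T₁(z)T₁(z)* − T₂(z)*T₂(z) is positive definite, where T₁(z) is the lower triangular Toeplitz matrix with first column (p₀(z), p₁(z), …, p_{m−1}(z)) and T₂(z) is the upper triangular Toeplitz matrix with first row (p_m(z), p_{m−1}(z), …, p₁(z)). -/

import Mathlib

open Complex MeasureTheory Finset Matrix
open scoped ComplexInnerProductSpace ComplexOrder

noncomputable section

/-- Evaluation of a bivariate polynomial with coefficient array `c i j`,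
supported on `0 ≤ i ≤ n`, `0 ≤ j ≤ m`. -/
def evalP (n m : ℕ) (c : ℕ → ℕ → ℂ) (z w : ℂ) : ℂ :=
  ∑ i ∈ Finset.range (n + 1), ∑ j ∈ Finset.range (m + 1), c i j * z ^ i * w ^ j

/-- `p` is stable: nonvanishing on the closed bidisk. -/
def Stable (n m : ℕ) (c : ℕ → ℕ → ℂ) : Prop :=
  ∀ z w : ℂ, ‖z‖ ≤ 1 → ‖w‖ ≤ 1 → evalP n m c z w ≠ 0

/-- `p` has degree exactly `n` in `z` and `m` in `w`. -/
def DegreeNM (n m : ℕ) (c : ℕ → ℕ → ℂ) : Prop :=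
  (∃ j, c n j ≠ 0) ∧ (∃ i, c i m ≠ 0)

/-- Coefficients of the reflected polynomial `p̃(z,w) = zⁿ wᵐ conj (p (1/z̄, 1/w̄))`. -/
def reflC (n m : ℕ) (c : ℕ → ℕ → ℂ) : ℕ → ℕ → ℂ :=
  fun i j => star (c (n - i) (m - j))

/-- The Laurent monomial `z^i w^j` as a function on the torus, `z = e^{iθ}`, `w = e^{iφ}`. -/
def tmono (i j : ℤ) : ℝ → ℝ → ℂ :=
  fun θ φ => Complex.exp (((i : ℂ) * (θ : ℂ) + (j : ℂ) * (φ : ℂ)) * Complex.I)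

/-- A bivariate polynomial as a function on the torus. -/
def onT (n m : ℕ) (c : ℕ → ℕ → ℂ) : ℝ → ℝ → ℂ :=
  fun θ φ => evalP n m c (Complex.exp ((θ : ℂ) * Complex.I)) (Complex.exp ((φ : ℂ) * Complex.I))

/-- The inner product `⟨f,g⟩ = ∫_{𝕋²} f ḡ dσ/|p|²` of `L²(dσ/|p|²)`. -/
def ip (n m : ℕ) (c : ℕ → ℕ → ℂ) (f g : ℝ → ℝ → ℂ) : ℂ :=
  (1 / (2 * Real.pi) ^ 2 : ℂ) *
    ∫ θ in (0 : ℝ)..(2 * Real.pi), ∫ φ in (0 : ℝ)..(2 * Real.pi),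
      f θ φ * star (g θ φ) / ((Complex.normSq (onT n m c θ φ) : ℝ) : ℂ)

/-- Numerator of the Christoffel–Darboux-type kernel `L`:
`zⁿ (p(z,w) conj(p(1/z̄,η)) − p̃(z,w) conj(p̃(1/z̄,η)))`. -/
def Lnum (n m : ℕ) (c : ℕ → ℕ → ℂ) (z w η : ℂ) : ℂ :=
  z ^ n * (evalP n m c z w * star (evalP n m c (star z)⁻¹ η)
    - evalP n m (reflC n m c) z w * star (evalP n m (reflC n m c) (star z)⁻¹ η))

/-- The kernel built from coefficient arrays `a k` for the polynomials `a_k(z,w)`: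
`L(z,w;η) = Σ_{k<m} a_k(z,w) η̄^k`. -/
def Lsum (n m : ℕ) (a : ℕ → ℕ → ℕ → ℂ) (z w η : ℂ) : ℂ :=
  ∑ k ∈ Finset.range m, evalP (2 * n) (m - 1) (a k) z w * (star η) ^ k

/-- `a` is the coefficient array of the kernel `L` associated with `p`:
`(1 - w η̄) L(z,w;η) = Lnum(z,w;η)` for all `z ≠ 0`. -/
def IsLCoeff (n m : ℕ) (c : ℕ → ℕ → ℂ) (a : ℕ → ℕ → ℕ → ℂ) : Prop :=
  ∀ z w η : ℂ, z ≠ 0 → (1 - w * star η) * Lsum n m a z w η = Lnum n m c z w η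

end

noncomputable section

/-- The coefficient polynomial `p_l(z)` of `w^l` in `p(z,w)`, with `ℤ` index
(zero outside `0 ≤ l ≤ m`). -/
def pcoefZ (n m : ℕ) (c : ℕ → ℕ → ℂ) (l : ℤ) (z : ℂ) : ℂ :=
  if 0 ≤ l ∧ l ≤ (m : ℤ) then ∑ s ∈ Finset.range (n + 1), c s l.toNat * z ^ s else 0

/-- The lower triangular Toeplitz matrix with first column `(p₀(z), …, p_{m-1}(z))`. -/
def T1mat (n m : ℕ) (c : ℕ → ℕ → ℂ) (z : ℂ) : Matrix (Fin m) (Fin m) ℂ :=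
  fun i j => if (j : ℕ) ≤ (i : ℕ) then pcoefZ n m c ((i : ℤ) - (j : ℤ)) z else 0

/-- The upper triangular Toeplitz matrix with first row `(p_m(z), p_{m-1}(z), …, p₁(z))`. -/
def T2mat (n m : ℕ) (c : ℕ → ℕ → ℂ) (z : ℂ) : Matrix (Fin m) (Fin m) ℂ :=
  fun i j => if (i : ℕ) ≤ (j : ℕ)
    then pcoefZ n m c ((m : ℤ) - ((j : ℤ) - (i : ℤ))) z else 0

end


namespace Statement19Aux
open Complex Finset Polynomial Matrix
open scoped ComplexOrder
noncomputable section

/-- sum of squared moduli of the first `m` coefficients -/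
def Nn (m : ℕ) (h : Polynomial ℂ) : ℝ := ∑ t ∈ Finset.range m, Complex.normSq (h.coeff t)

lemma Nn_nonneg (m : ℕ) (h : Polynomial ℂ) : 0 ≤ Nn m h :=
  Finset.sum_nonneg fun _ _ => Complex.normSq_nonneg _

lemma Nn_C_mul (m : ℕ) (a : ℂ) (h : Polynomial ℂ) :
    Nn m (C a * h) = Complex.normSq a * Nn m h := by
  simp [Nn, Finset.mul_sum, Complex.normSq_mul]

lemma Nn_X_mul (m : ℕ) (hm : 0 < m) (h : Polynomial ℂ) :
    Nn m (X * h) = Nn m h - Complex.normSq (h.coeff (m - 1)) := by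
  obtain ⟨k, rfl⟩ : ∃ k, m = k + 1 := ⟨m - 1, by omega⟩
  simp only [Nn]
  rw [Finset.sum_range_succ', Finset.sum_range_succ]
  simp [Polynomial.coeff_X_mul]

lemma Nn_X_pow_mul (m e : ℕ) (h : Polynomial ℂ) :
    Nn m (X ^ e * h) = ∑ t ∈ Finset.range (m - e), Complex.normSq (h.coeff t) := by
  rcases le_or_gt e m with he | he
  · have : ∀ t ∈ Finset.range m, Complex.normSq ((X ^ e * h).coeff t)
        = if e ≤ t then Complex.normSq (h.coeff (t - e)) else 0 := by
      intro t _
      rw [mul_comm, Polynomial.coeff_mul_X_pow']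
      split <;> simp
    rw [Nn, Finset.sum_congr rfl this, Finset.sum_ite, Finset.sum_const_zero, add_zero]
    have hfil : Finset.filter (fun t => e ≤ t) (Finset.range m) = Finset.Ico e m := by
      ext t; simp [Finset.mem_filter, Finset.mem_Ico, and_comm]
    rw [hfil, Finset.sum_Ico_eq_sum_range]
    simp
  · have h1 : m - e = 0 := by omega
    rw [h1]
    simp only [Finset.range_zero, Finset.sum_empty, Nn]
    apply Finset.sum_eq_zero
    intro t ht
    rw [mul_comm, Polynomial.coeff_mul_X_pow']
    rw [if_neg (by simp at ht; omega)]
    simp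

lemma Nn_X_pow_mul_le (m e : ℕ) (h : Polynomial ℂ) : Nn m (X ^ e * h) ≤ Nn m h := by
  rw [Nn_X_pow_mul]
  exact Finset.sum_le_sum_of_subset_of_nonneg
    (Finset.range_subset_range.2 (by omega)) (fun _ _ _ => Complex.normSq_nonneg _)

lemma Nn_X_pow_mul_le' (m e s : ℕ) (hs1 : m - e ≤ s) (hs2 : s < m) (h : Polynomial ℂ) :
    Nn m (X ^ e * h) + Complex.normSq (h.coeff s) ≤ Nn m h := by
  rw [Nn_X_pow_mul]
  have hsub : insert s (Finset.range (m - e)) ⊆ Finset.range m := by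
    intro t ht
    simp only [Finset.mem_insert, Finset.mem_range] at ht ⊢
    rcases ht with rfl | ht; · omega
    · omega
  have hns : s ∉ Finset.range (m - e) := by simp; omega
  calc ∑ t ∈ Finset.range (m - e), Complex.normSq (h.coeff t) + Complex.normSq (h.coeff s)
      = ∑ t ∈ insert s (Finset.range (m - e)), Complex.normSq (h.coeff t) := by
        rw [Finset.sum_insert hns]; ring
    _ ≤ Nn m h := Finset.sum_le_sum_of_subset_of_nonneg hsub
        (fun _ _ _ => Complex.normSq_nonneg _)

lemma ptid (a b ζ : ℂ) :
    Complex.normSq (a - ζ * b) =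
      Complex.normSq (b - (starRingEnd ℂ) ζ * a) +
        (Complex.normSq ζ - 1) * (Complex.normSq b - Complex.normSq a) := by
  simp only [Complex.normSq_apply, Complex.sub_re, Complex.sub_im, Complex.mul_re,
    Complex.mul_im, Complex.conj_re, Complex.conj_im]
  ring

lemma lemA (m : ℕ) (hm : 0 < m) (ζ : ℂ) (h : Polynomial ℂ) :
    Nn m ((X - C ζ) * h) =
      Nn m ((1 - C ((starRingEnd ℂ) ζ) * X) * h) +
        (Complex.normSq ζ - 1) * Complex.normSq (h.coeff (m - 1)) := by
  have c1 : ∀ t, ((X - C ζ) * h).coeff t = (X * h).coeff t - ζ * h.coeff t := by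
    intro t; rw [sub_mul, Polynomial.coeff_sub, Polynomial.coeff_C_mul]
  have c2 : ∀ t, ((1 - C ((starRingEnd ℂ) ζ) * X) * h).coeff t
      = h.coeff t - (starRingEnd ℂ) ζ * (X * h).coeff t := by
    intro t
    rw [sub_mul, one_mul, Polynomial.coeff_sub, mul_assoc, Polynomial.coeff_C_mul]
  have key : ∀ t, Complex.normSq (((X - C ζ) * h).coeff t)
      = Complex.normSq (((1 - C ((starRingEnd ℂ) ζ) * X) * h).coeff t)
        + (Complex.normSq ζ - 1) *
          (Complex.normSq (h.coeff t) - Complex.normSq ((X * h).coeff t)) := by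
    intro t; rw [c1 t, c2 t]; exact ptid _ _ _
  have : Nn m ((X - C ζ) * h) = Nn m ((1 - C ((starRingEnd ℂ) ζ) * X) * h)
      + (Complex.normSq ζ - 1) * (Nn m h - Nn m (X * h)) := by
    simp only [Nn]
    rw [Finset.sum_congr rfl (fun t _ => key t), Finset.sum_add_distrib, ← Finset.mul_sum,
      Finset.sum_sub_distrib]
  rw [this, Nn_X_mul m hm h]; ring


def PM (M : Multiset ℂ) : Polynomial ℂ := (M.map (fun ζ => X - C ζ)).prod
def PT (M : Multiset ℂ) : Polynomial ℂ :=
  (M.map (fun ζ => 1 - C ((starRingEnd ℂ) ζ) * X)).prod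
@[simp] lemma PM_zero : PM 0 = 1 := by simp [PM]
@[simp] lemma PT_zero : PT 0 = 1 := by simp [PT]
@[simp] lemma PM_cons (ζ : ℂ) (M : Multiset ℂ) : PM (ζ ::ₘ M) = (X - C ζ) * PM M := by
  simp [PM]
@[simp] lemma PT_cons (ζ : ℂ) (M : Multiset ℂ) :
    PT (ζ ::ₘ M) = (1 - C ((starRingEnd ℂ) ζ) * X) * PT M := by simp [PT]
lemma lemF (m : ℕ) (hm : 0 < m) (ζ : ℂ) (hζ : 1 ≤ Complex.normSq ζ) (h : Polynomial ℂ) :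
    Nn m ((1 - C ((starRingEnd ℂ) ζ) * X) * h) ≤ Nn m ((X - C ζ) * h) := by
  rw [lemA m hm ζ h]
  nlinarith [Complex.normSq_nonneg (h.coeff (m - 1))]

lemma lemG (m : ℕ) (hm : 0 < m) (M : Multiset ℂ) (hM : ∀ ζ ∈ M, 1 ≤ Complex.normSq ζ) :
    ∀ Q g : Polynomial ℂ, Nn m (Q * (PT M * g)) ≤ Nn m (Q * (PM M * g)) := by
  induction M using Multiset.induction_on with
  | empty => intro Q g; simp
  | cons ζ M ih =>
    intro Q g
    have hζ : 1 ≤ Complex.normSq ζ := hM ζ (Multiset.mem_cons_self _ _)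
    have hM' : ∀ ζ ∈ M, 1 ≤ Complex.normSq ζ :=
      fun x hx => hM x (Multiset.mem_cons_of_mem hx)
    have e1 : Q * (PT (ζ ::ₘ M) * g)
        = (Q * (1 - C ((starRingEnd ℂ) ζ) * X)) * (PT M * g) := by rw [PT_cons]; ring
    have e2 : (Q * (1 - C ((starRingEnd ℂ) ζ) * X)) * (PM M * g)
        = (1 - C ((starRingEnd ℂ) ζ) * X) * (Q * (PM M * g)) := by ring
    have e3 : (X - C ζ) * (Q * (PM M * g)) = Q * (PM (ζ ::ₘ M) * g) := by
      rw [PM_cons]; ring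
    calc Nn m (Q * (PT (ζ ::ₘ M) * g))
        = Nn m ((Q * (1 - C ((starRingEnd ℂ) ζ) * X)) * (PT M * g)) := by rw [e1]
      _ ≤ Nn m ((Q * (1 - C ((starRingEnd ℂ) ζ) * X)) * (PM M * g)) := ih hM' _ _
      _ = Nn m ((1 - C ((starRingEnd ℂ) ζ) * X) * (Q * (PM M * g))) := by rw [e2]
      _ ≤ Nn m ((X - C ζ) * (Q * (PM M * g))) := lemF m hm ζ hζ _
      _ = Nn m (Q * (PM (ζ ::ₘ M) * g)) := by rw [e3]

lemma lemE (m : ℕ) (hm : 0 < m) (S R : Multiset ℂ) (ζ : ℂ)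
    (hS : ∀ x ∈ S, 1 ≤ Complex.normSq x) (hR : ∀ x ∈ R, 1 ≤ Complex.normSq x)
    (g : Polynomial ℂ) :
    Nn m (PT (S + ζ ::ₘ R) * g) +
        (Complex.normSq ζ - 1) * Complex.normSq ((PM S * (PT R * g)).coeff (m - 1))
      ≤ Nn m (PM (S + ζ ::ₘ R) * g) := by
  have hPTadd : ∀ A B : Multiset ℂ, PT (A + B) = PT A * PT B := by
    intro A B; simp [PT, Multiset.prod_map_add]
  have hPMadd : ∀ A B : Multiset ℂ, PM (A + B) = PM A * PM B := by
    intro A B; simp [PM, Multiset.prod_map_add]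
  have e1 : PT (S + ζ ::ₘ R) * g
      = (1 - C ((starRingEnd ℂ) ζ) * X) * (PT S * (PT R * g)) := by
    rw [hPTadd, PT_cons]; ring
  have step1 : Nn m ((1 - C ((starRingEnd ℂ) ζ) * X) * (PT S * (PT R * g)))
      ≤ Nn m ((1 - C ((starRingEnd ℂ) ζ) * X) * (PM S * (PT R * g))) :=
    lemG m hm S hS _ _
  have step2 : Nn m ((1 - C ((starRingEnd ℂ) ζ) * X) * (PM S * (PT R * g)))
      + (Complex.normSq ζ - 1) * Complex.normSq ((PM S * (PT R * g)).coeff (m - 1))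
      = Nn m ((X - C ζ) * (PM S * (PT R * g))) := (lemA m hm ζ _).symm
  have e2 : (X - C ζ) * (PM S * (PT R * g)) = ((X - C ζ) * PM S) * (PT R * g) := by ring
  have step3 : Nn m (((X - C ζ) * PM S) * (PT R * g))
      ≤ Nn m (((X - C ζ) * PM S) * (PM R * g)) := lemG m hm R hR _ _
  have e3 : ((X - C ζ) * PM S) * (PM R * g) = PM (S + ζ ::ₘ R) * g := by
    rw [hPMadd, PM_cons]; ring
  calc Nn m (PT (S + ζ ::ₘ R) * g) +
        (Complex.normSq ζ - 1) * Complex.normSq ((PM S * (PT R * g)).coeff (m - 1))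
      = Nn m ((1 - C ((starRingEnd ℂ) ζ) * X) * (PT S * (PT R * g))) + _ := by rw [e1]
    _ ≤ Nn m ((1 - C ((starRingEnd ℂ) ζ) * X) * (PM S * (PT R * g))) + _ :=
        add_le_add_left step1 _
    _ = Nn m ((X - C ζ) * (PM S * (PT R * g))) := step2
    _ = Nn m (((X - C ζ) * PM S) * (PT R * g)) := by rw [e2]
    _ ≤ Nn m (((X - C ζ) * PM S) * (PM R * g)) := step3
    _ = Nn m (PM (S + ζ ::ₘ R) * g) := by rw [e3]

lemma span (m : ℕ) (M : Multiset ℂ) :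
    ∀ g : Polynomial ℂ, (∀ ζ ∈ M, Complex.normSq ζ ≠ 1) →
      (∀ S ζ R, M = S + ζ ::ₘ R → (PM S * (PT R * g)).coeff (m - 1) = 0) →
      ∀ a, a < Multiset.card M → (X ^ a * g).coeff (m - 1) = 0 := by
  induction M using Multiset.induction_on with
  | empty => intro g _ _ a ha; simp at ha
  | cons μ M' ih =>
    intro g hnorm hg a ha
    have hμ : Complex.normSq μ ≠ 1 := hnorm μ (Multiset.mem_cons_self _ _)
    have hnorm' : ∀ ζ ∈ M', Complex.normSq ζ ≠ 1 :=
      fun x hx => hnorm x (Multiset.mem_cons_of_mem hx)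
    have hfac : (1 : ℂ) - μ * (starRingEnd ℂ) μ ≠ 0 := by
      rw [Complex.mul_conj]
      intro h
      apply hμ
      have h2 : ((Complex.normSq μ : ℝ) : ℂ) = ((1 : ℝ) : ℂ) := by
        push_cast
        linear_combination -h
      exact_mod_cast h2
    have c1 : ∀ a', a' < Multiset.card M' →
        (X ^ a' * ((X - C μ) * g)).coeff (m - 1) = 0 := by
      apply ih ((X - C μ) * g) hnorm'
      intro S ζ R hd
      have hd2 : μ ::ₘ M' = (μ ::ₘ S) + ζ ::ₘ R := by rw [hd, Multiset.cons_add]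
      have h3 := hg (μ ::ₘ S) ζ R hd2
      have e : PM (μ ::ₘ S) * (PT R * g) = PM S * (PT R * ((X - C μ) * g)) := by
        rw [PM_cons]; ring
      rwa [e] at h3
    have c2 : ∀ a', a' < Multiset.card M' →
        (X ^ a' * ((1 - C ((starRingEnd ℂ) μ) * X) * g)).coeff (m - 1) = 0 := by
      apply ih ((1 - C ((starRingEnd ℂ) μ) * X) * g) hnorm'
      intro S ζ R hd
      have hd2 : μ ::ₘ M' = S + ζ ::ₘ (μ ::ₘ R) := by
        rw [hd]
        rw [Multiset.add_cons, Multiset.add_cons, Multiset.cons_swap, Multiset.add_cons]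
      have h3 := hg S ζ (μ ::ₘ R) hd2
      have e : PM S * (PT (μ ::ₘ R) * g)
          = PM S * (PT R * ((1 - C ((starRingEnd ℂ) μ) * X) * g)) := by
        rw [PT_cons]; ring
      rwa [e] at h3
    have key1 : ∀ a', a' < Multiset.card M' → (X ^ (a' + 1) * g).coeff (m - 1) = 0 := by
      intro a' ha'
      have idA : C (1 - μ * (starRingEnd ℂ) μ) * (X ^ (a' + 1) * g)
          = X ^ a' * ((X - C μ) * g)
            + C μ * (X ^ a' * ((1 - C ((starRingEnd ℂ) μ) * X) * g)) := by
        rw [_root_.map_sub, _root_.map_one, _root_.map_mul]; ring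
      have h4 := congrArg (fun p => Polynomial.coeff p (m - 1)) idA
      simp only [Polynomial.coeff_add, Polynomial.coeff_C_mul, c1 a' ha', c2 a' ha',
        mul_zero, add_zero] at h4
      exact (mul_eq_zero.mp h4).resolve_left hfac
    have keyB : ∀ a', a' < Multiset.card M' → (X ^ a' * g).coeff (m - 1) = 0 := by
      intro a' ha'
      have idB : C (1 - μ * (starRingEnd ℂ) μ) * (X ^ a' * g)
          = C ((starRingEnd ℂ) μ) * (X ^ a' * ((X - C μ) * g))
            + X ^ a' * ((1 - C ((starRingEnd ℂ) μ) * X) * g) := by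
        rw [_root_.map_sub, _root_.map_one, _root_.map_mul]; ring
      have h4 := congrArg (fun p => Polynomial.coeff p (m - 1)) idB
      simp only [Polynomial.coeff_add, Polynomial.coeff_C_mul, c1 a' ha', c2 a' ha',
        mul_zero, zero_add, add_zero] at h4
      exact (mul_eq_zero.mp h4).resolve_left hfac
    rw [Multiset.card_cons] at ha
    rcases lt_or_ge a (Multiset.card M') with hlt | hge
    · exact keyB a hlt
    · have haeq : a = Multiset.card M' := by omega
      rcases Nat.eq_zero_or_pos a with rfl | hpos
      · -- a = 0 hence card M' = 0, M' = 0; use hg directly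
        have hM0 : M' = 0 := by
          rw [← Multiset.card_eq_zero]; omega
        have h5 := hg 0 μ M' (by rw [hM0]; simp)
        rw [hM0] at h5
        simpa using h5
      · obtain ⟨a', rfl⟩ : ∃ a', a = a' + 1 := ⟨a - 1, by omega⟩
        exact key1 a' (by omega)

def PT' (M : Multiset ℂ) : Polynomial ℂ := (M.map (fun ζ => 1 - C ζ * X)).prod
@[simp] lemma PT'_zero : PT' 0 = 1 := by simp [PT']
@[simp] lemma PT'_cons (ζ : ℂ) (M : Multiset ℂ) :
    PT' (ζ ::ₘ M) = (1 - C ζ * X) * PT' M := by simp [PT']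

lemma PM_monic (M : Multiset ℂ) : (PM M).Monic :=
  Polynomial.monic_multiset_prod_of_monic _ _ (fun i _ => Polynomial.monic_X_sub_C i)

lemma PM_natDegree (M : Multiset ℂ) : (PM M).natDegree = Multiset.card M := by
  induction M using Multiset.induction_on with
  | empty => simp
  | cons ζ M ih =>
    rw [PM_cons, Polynomial.Monic.natDegree_mul (monic_X_sub_C ζ) (PM_monic M), ih,
      Polynomial.natDegree_X_sub_C, Multiset.card_cons, add_comm]

lemma one_sub_C_mul_X_natDegree (ζ : ℂ) (hζ : ζ ≠ 0) :
    (1 - C ζ * X).natDegree = 1 := by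
  have e : (1 : Polynomial ℂ) - C ζ * X = C (-ζ) * X + C 1 := by
    rw [_root_.map_neg, _root_.map_one]; ring
  rw [e, Polynomial.natDegree_add_C, Polynomial.natDegree_C_mul_X _ (neg_ne_zero.mpr hζ)]

lemma one_sub_C_mul_X_ne_zero (ζ : ℂ) (hζ : ζ ≠ 0) : (1 : Polynomial ℂ) - C ζ * X ≠ 0 := by
  intro h
  have := one_sub_C_mul_X_natDegree ζ hζ
  rw [h] at this
  simp at this

lemma PT_ne_zero (M : Multiset ℂ) (h : ∀ ζ ∈ M, ζ ≠ 0) : PT M ≠ 0 := by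
  induction M using Multiset.induction_on with
  | empty => simp [PT]
  | cons ζ M ih =>
    have h1 : (starRingEnd ℂ) ζ ≠ 0 := by
      simpa using h ζ (Multiset.mem_cons_self _ _)
    have : PT (ζ ::ₘ M) = (1 - C ((starRingEnd ℂ) ζ) * X) * PT M := by simp [PT]
    rw [this]
    exact mul_ne_zero (one_sub_C_mul_X_ne_zero _ h1)
      (ih fun x hx => h x (Multiset.mem_cons_of_mem hx))

lemma PT_natDegree (M : Multiset ℂ) (h : ∀ ζ ∈ M, ζ ≠ 0) :
    (PT M).natDegree = Multiset.card M := by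
  induction M using Multiset.induction_on with
  | empty => simp [PT]
  | cons ζ M ih =>
    have h1 : (starRingEnd ℂ) ζ ≠ 0 := by
      simpa using h ζ (Multiset.mem_cons_self _ _)
    have e : PT (ζ ::ₘ M) = (1 - C ((starRingEnd ℂ) ζ) * X) * PT M := by simp [PT]
    rw [e, Polynomial.natDegree_mul (one_sub_C_mul_X_ne_zero _ h1)
        (PT_ne_zero M fun x hx => h x (Multiset.mem_cons_of_mem hx)),
      one_sub_C_mul_X_natDegree _ h1, ih fun x hx => h x (Multiset.mem_cons_of_mem hx),
      Multiset.card_cons, add_comm]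

lemma reflect_one_X_sub_C (ζ : ℂ) : Polynomial.reflect 1 (X - C ζ) = 1 - C ζ * X := by
  have e : (X : Polynomial ℂ) - C ζ = C 1 * X ^ 1 + C (-ζ) * X ^ 0 := by
    simp; ring
  rw [e, Polynomial.reflect_add, Polynomial.reflect_C_mul_X_pow,
    Polynomial.reflect_C_mul_X_pow]
  simp [Polynomial.revAt_le]
  ring

lemma reflect_PM (M : Multiset ℂ) : ∀ m : ℕ, Multiset.card M ≤ m →
    Polynomial.reflect m (PM M) = X ^ (m - Multiset.card M) * PT' M := by
  induction M using Multiset.induction_on with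
  | empty =>
    intro m _
    have : PM 0 = C 1 := by simp
    rw [this, Polynomial.reflect_C]
    simp
  | cons ζ M ih =>
    intro m hm
    rw [Multiset.card_cons] at hm
    have hm1 : 1 ≤ m := by omega
    have e1 : m = 1 + (m - 1) := by omega
    rw [PM_cons, e1, Polynomial.reflect_mul (X - C ζ) (PM M)
      (by rw [Polynomial.natDegree_X_sub_C]) (by rw [PM_natDegree]; omega),
      reflect_one_X_sub_C, ih (m - 1) (by omega), PT'_cons]
    rw [Multiset.card_cons]
    have e2 : 1 + (m - 1) - (Multiset.card M + 1) = m - 1 - Multiset.card M := by omega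
    rw [e2]
    ring


lemma map_PT' (M : Multiset ℂ) : (PT' M).map (starRingEnd ℂ) = PT M := by
  induction M using Multiset.induction_on with
  | empty => simp
  | cons ζ M ih =>
    rw [PT'_cons, PT_cons, Polynomial.map_mul, ih]
    simp

lemma core (m : ℕ) (hm : 0 < m) (r : Polynomial ℂ) (hrdeg : r.natDegree ≤ m)
    (hstab : ∀ w : ℂ, ‖w‖ ≤ 1 → r.eval w ≠ 0)
    (f : Polynomial ℂ) (hf : f ≠ 0) (hfdeg : f.natDegree < m) :
    Nn m ((Polynomial.reflect m r).map (starRingEnd ℂ) * f) < Nn m (r * f) := by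
  have hr0 : r ≠ 0 := by
    intro h
    exact hstab 0 (by simp) (by simp [h])
  set M := r.roots with hM
  set d := Multiset.card M with hdd
  have hd : d = r.natDegree := by
    rw [hdd, hM]
    exact Polynomial.splits_iff_card_roots.mp (IsAlgClosed.splits r)
  have hdm : d ≤ m := hd ▸ hrdeg
  set e := m - d with he
  have hde : d + e = m := by omega
  have hnormroot : ∀ ζ ∈ M, 1 < Complex.normSq ζ := by
    intro ζ hζ
    have hev : r.eval ζ = 0 := Polynomial.isRoot_of_mem_roots hζ
    have h1 : ¬ ‖ζ‖ ≤ 1 := fun hle => hstab ζ hle hev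
    have h2 : 1 < ‖ζ‖ := by linarith [not_le.mp h1]
    have h3 : Complex.normSq ζ = ‖ζ‖ ^ 2 := by
      rw [Complex.normSq_eq_norm_sq]
    nlinarith
  have hntz : ∀ ζ ∈ M, ζ ≠ 0 := by
    intro ζ hζ h0
    have := hnormroot ζ hζ
    rw [h0] at this
    norm_num [Complex.normSq] at this
  have hge1 : ∀ ζ ∈ M, 1 ≤ Complex.normSq ζ := fun ζ hζ => le_of_lt (hnormroot ζ hζ)
  set a := r.leadingCoeff with ha
  have ha0 : a ≠ 0 := Polynomial.leadingCoeff_ne_zero.mpr hr0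
  have hfact : C a * PM M = r := by
    rw [ha, hM]
    exact Polynomial.C_leadingCoeff_mul_prod_multiset_X_sub_C (hd.symm ▸ hd ▸ (by rw [← hd]))
  have hrefl : (Polynomial.reflect m r).map (starRingEnd ℂ)
      = C ((starRingEnd ℂ) a) * (X ^ e * PT M) := by
    have e0 : m = 0 + m := by omega
    rw [← hfact, e0, Polynomial.reflect_mul (C a) (PM M)
        (by rw [Polynomial.natDegree_C]) (by rw [PM_natDegree]; exact hdm),
      Polynomial.reflect_C, reflect_PM M m hdm]
    simp only [Polynomial.map_mul, Polynomial.map_pow, Polynomial.map_C, Polynomial.map_X,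
      map_PT']
    rw [← hdd, ← he]
    ring
  -- reduce to the normalized inequality
  have hmain : Nn m (X ^ e * (PT M * f)) < Nn m (PM M * f) := by
    by_cases hc : ∀ S ζ R, M = S + ζ ::ₘ R → (PM S * (PT R * f)).coeff (m - 1) = 0
    · -- all defects of root type vanish: f has small degree, use top coefficient of PT M * f
      have hspan := span m M f (fun ζ hζ => (hnormroot ζ hζ).ne') hc
      have hcoeff : ∀ t, e ≤ t → f.coeff t = 0 := by
        intro t ht
        rcases lt_or_ge t m with htm | htm
        · have hd1 : m - 1 - t < d := by omega
          have h5 := hspan (m - 1 - t) hd1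
          rw [mul_comm, Polynomial.coeff_mul_X_pow'] at h5
          rw [if_pos (by omega)] at h5
          have : m - 1 - (m - 1 - t) = t := by omega
          rwa [this] at h5
        · exact Polynomial.coeff_eq_zero_of_natDegree_lt (by omega)
      have he0 : 0 < e := by
        rcases Nat.eq_zero_or_pos e with he0 | he0
        · exfalso
          apply hf
          ext t
          rw [hcoeff t (by omega)]
          simp
        · exact he0
      set D := f.natDegree with hD
      have hDe : D < e := by
        by_contra hcon
        exact Polynomial.leadingCoeff_ne_zero.mpr hf (hcoeff D (by omega))
      have hPT0 : PT M ≠ 0 := PT_ne_zero M hntz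
      have hPTf0 : PT M * f ≠ 0 := mul_ne_zero hPT0 hf
      have hdeg2 : (PT M * f).natDegree = d + D := by
        rw [Polynomial.natDegree_mul hPT0 hf, PT_natDegree M hntz]
      have hkey : (PT M * f).coeff (d + D) ≠ 0 := by
        have h6 := Polynomial.leadingCoeff_ne_zero.mpr hPTf0
        rwa [Polynomial.leadingCoeff, hdeg2] at h6
      have step1 : Nn m (X ^ e * (PT M * f)) + Complex.normSq ((PT M * f).coeff (d + D))
          ≤ Nn m (PT M * f) :=
        Nn_X_pow_mul_le' m e (d + D) (by omega) (by omega) (PT M * f)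
      have step2 : Nn m (PT M * f) ≤ Nn m (PM M * f) := by
        have := lemG m hm M hge1 1 f
        simpa using this
      have hpos : 0 < Complex.normSq ((PT M * f).coeff (d + D)) := by
        rcases (Complex.normSq_pos).mpr hkey with h; exact h
      linarith
    · push_neg at hc
      obtain ⟨S, ζ, R, hdecomp, hne⟩ := hc
      have hζmem : ζ ∈ M := by rw [hdecomp]; simp
      have hζnorm : 1 < Complex.normSq ζ := hnormroot ζ hζmem
      have hSnorm : ∀ x ∈ S, 1 ≤ Complex.normSq x := by
        intro x hx; exact hge1 x (by rw [hdecomp]; simp [hx])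
      have hRnorm : ∀ x ∈ R, 1 ≤ Complex.normSq x := by
        intro x hx
        exact hge1 x (by
          rw [hdecomp]
          exact Multiset.mem_add.mpr (Or.inr (Multiset.mem_cons_of_mem hx)))
      have step1 := lemE m hm S R ζ hSnorm hRnorm f
      rw [← hdecomp] at step1
      have step2 : Nn m (X ^ e * (PT M * f)) ≤ Nn m (PT M * f) := Nn_X_pow_mul_le m e _
      have hpos : 0 < (Complex.normSq ζ - 1)
          * Complex.normSq ((PM S * (PT R * f)).coeff (m - 1)) := by
        apply mul_pos (by linarith) (Complex.normSq_pos.mpr hne)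
      linarith
  calc Nn m ((Polynomial.reflect m r).map (starRingEnd ℂ) * f)
      = Nn m (C ((starRingEnd ℂ) a) * (X ^ e * (PT M * f))) := by
        rw [hrefl]; ring_nf
    _ = Complex.normSq a * Nn m (X ^ e * (PT M * f)) := by
        rw [Nn_C_mul, Complex.normSq_conj]
    _ < Complex.normSq a * Nn m (PM M * f) := by
        exact mul_lt_mul_of_pos_left hmain (Complex.normSq_pos.mpr ha0)
    _ = Nn m (C a * (PM M * f)) := by rw [Nn_C_mul]
    _ = Nn m (r * f) := by rw [← hfact]; ring_nf


lemma Nn_def (m : ℕ) (h : Polynomial ℂ) :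
    Nn m h = ∑ t ∈ Finset.range m, Complex.normSq (h.coeff t) := rfl
lemma coeff_sumCX (m : ℕ) (φ : ℕ → ℂ) (k : ℕ) :
    (∑ l ∈ Finset.range (m + 1), C (φ l) * X ^ l).coeff k = if k ≤ m then φ k else 0 := by
  rw [Polynomial.finset_sum_coeff]
  have : ∀ l ∈ Finset.range (m + 1), (C (φ l) * X ^ l).coeff k
      = if l = k then φ l else 0 := by
    intro l _
    rw [Polynomial.coeff_C_mul, Polynomial.coeff_X_pow]
    rcases eq_or_ne l k with rfl | h
    · simp
    · rw [if_neg (fun hh => h hh.symm), if_neg h, mul_zero]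
  rw [Finset.sum_congr rfl this, Finset.sum_ite_eq' (Finset.range (m + 1)) k φ]
  simp only [Finset.mem_range]
  split <;> split <;> first | rfl | omega

lemma dotStar {m : ℕ} (y : Fin m → ℂ) :
    dotProduct (star y) y = ((∑ i, Complex.normSq (y i) : ℝ) : ℂ) := by
  rw [dotProduct]
  push_cast
  apply Finset.sum_congr rfl
  intro i _
  simp only [Pi.star_apply, Complex.star_def]
  rw [mul_comm, Complex.mul_conj]
lemma key (n m : ℕ) (c : ℕ → ℕ → ℂ)
    (hstable : ∀ z w : ℂ, ‖z‖ ≤ 1 → ‖w‖ ≤ 1 →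
      (∑ i ∈ Finset.range (n + 1), ∑ j ∈ Finset.range (m + 1), c i j * z ^ i * w ^ j) ≠ 0)
    (z : ℂ) (hz : ‖z‖ = 1) (hm : 0 < m) (x : Fin m → ℂ) (hx : x ≠ 0)
    (A B : Matrix (Fin m) (Fin m) ℂ)
    (hA : ∀ i j : Fin m, A i j = if (j : ℕ) ≤ (i : ℕ) then
      (if 0 ≤ (i : ℤ) - (j : ℤ) ∧ (i : ℤ) - (j : ℤ) ≤ (m : ℤ) then
        ∑ s ∈ Finset.range (n + 1), c s ((i : ℤ) - (j : ℤ)).toNat * z ^ s else 0) else 0)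
    (hB : ∀ i j : Fin m, B i j = if (i : ℕ) ≤ (j : ℕ) then
      (if 0 ≤ (m : ℤ) - ((j : ℤ) - (i : ℤ)) ∧ (m : ℤ) - ((j : ℤ) - (i : ℤ)) ≤ (m : ℤ) then
        ∑ s ∈ Finset.range (n + 1), c s ((m : ℤ) - ((j : ℤ) - (i : ℤ))).toNat * z ^ s else 0)
        else 0) :
    0 < dotProduct (star x) ((A * Aᴴ - Bᴴ * B) *ᵥ x) := by
  classical
  set p : ℕ → ℂ := fun l => ∑ s ∈ Finset.range (n + 1), c s l * z ^ s with hp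
  set rb : Polynomial ℂ := ∑ l ∈ Finset.range (m + 1), C ((starRingEnd ℂ) (p l)) * X ^ l
    with hrb
  set Rt : Polynomial ℂ := (Polynomial.reflect m rb).map (starRingEnd ℂ) with hRt
  have hrbc : ∀ l, rb.coeff l = if l ≤ m then (starRingEnd ℂ) (p l) else 0 := by
    intro l; rw [hrb, coeff_sumCX]
  have hrdeg : rb.natDegree ≤ m := by
    rw [Polynomial.natDegree_le_iff_coeff_eq_zero]
    intro N hN
    rw [hrbc, if_neg (by omega)]
  have hrtc : ∀ l, l ≤ m → Rt.coeff l = p (m - l) := by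
    intro l hl
    rw [hRt, Polynomial.coeff_map, Polynomial.coeff_reflect, Polynomial.revAt_le hl, hrbc,
      if_pos (by omega)]
    simp
  -- stability of rb
  have hstab' : ∀ w : ℂ, ‖w‖ ≤ 1 → rb.eval w ≠ 0 := by
    intro w hw hev
    have he1 : rb.eval w
        = ∑ l ∈ Finset.range (m + 1), (starRingEnd ℂ) (p l) * w ^ l := by
      rw [hrb, Polynomial.eval_finset_sum]
      simp
    have he2 : (∑ i ∈ Finset.range (n + 1), ∑ j ∈ Finset.range (m + 1),
        c i j * z ^ i * ((starRingEnd ℂ) w) ^ j)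
        = ∑ l ∈ Finset.range (m + 1), p l * ((starRingEnd ℂ) w) ^ l := by
      rw [Finset.sum_comm]
      apply Finset.sum_congr rfl
      intro j _
      rw [hp, Finset.sum_mul]
    apply hstable z ((starRingEnd ℂ) w) (le_of_eq hz) (by simpa using hw)
    rw [he2, ← Complex.conj_conj (∑ l ∈ Finset.range (m + 1), p l * ((starRingEnd ℂ) w) ^ l)]
    have he3 : (starRingEnd ℂ) (∑ l ∈ Finset.range (m + 1), p l * ((starRingEnd ℂ) w) ^ l)
        = rb.eval w := by
      rw [map_sum]
      simp only [_root_.map_mul, map_pow, Complex.conj_conj]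
      rw [he1]
    rw [he3, hev, map_zero]

  -- the test polynomial built from x (reversed)
  set f : Polynomial ℂ := ∑ j : Fin m, C (x j) * X ^ (m - 1 - (j : ℕ)) with hfdef
  have hfc : ∀ k, f.coeff k = ∑ j : Fin m, (if m - 1 - (j : ℕ) = k then x j else 0) := by
    intro k
    rw [hfdef, Polynomial.finset_sum_coeff]
    apply Finset.sum_congr rfl
    intro j _
    rw [Polynomial.coeff_C_mul, Polynomial.coeff_X_pow]
    rcases eq_or_ne (m - 1 - (j : ℕ)) k with h | h
    · simp [h]
    · rw [if_neg (fun hh => h hh.symm), mul_zero, if_neg h]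
  have hfc2 : ∀ j : Fin m, f.coeff (m - 1 - (j : ℕ)) = x j := by
    intro j
    rw [hfc]
    rw [Finset.sum_eq_single j]
    · simp
    · intro b _ hbj
      rw [if_neg]
      intro hcontr
      apply hbj
      have hb := b.isLt
      have hj := j.isLt
      apply Fin.ext
      omega
    · intro h
      exact absurd (Finset.mem_univ j) h
  have hfne : f ≠ 0 := by
    intro h0
    apply hx
    funext j
    have := hfc2 j
    rw [h0] at this
    simp at this
    exact this.symm
  have hfdeg : f.natDegree < m := by
    have : f.natDegree ≤ m - 1 := by
      rw [Polynomial.natDegree_le_iff_coeff_eq_zero]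
      intro N hN
      rw [hfc]
      apply Finset.sum_eq_zero
      intro j _
      rw [if_neg]
      have := j.isLt
      omega
    omega
  -- the two key coefficient identities
  have hAH : ∀ i : Fin m, (rb * f).coeff (i : ℕ) = (Aᴴ *ᵥ x) (Fin.rev i) := by
    intro i
    have hi := i.isLt
    have hrev : ((Fin.rev i : Fin m) : ℕ) = m - 1 - (i : ℕ) := by
      rw [Fin.val_rev]; omega
    rw [hfdef, Finset.mul_sum, Polynomial.finset_sum_coeff]
    rw [Matrix.mulVec, dotProduct]
    apply Finset.sum_congr rfl
    intro j _
    have hj := j.isLt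
    have e1 : rb * (C (x j) * X ^ (m - 1 - (j : ℕ)))
        = C (x j) * rb * X ^ (m - 1 - (j : ℕ)) := by ring
    rw [e1, Polynomial.coeff_mul_X_pow', Matrix.conjTranspose_apply, hA]
    rw [hrev]
    rcases le_or_gt (m - 1 - (i : ℕ)) (j : ℕ) with hcond | hcond
    · rw [if_pos (by omega), if_pos (by omega)]
      rw [if_pos (by constructor <;> [omega; (push_cast; omega)])]
      rw [Polynomial.coeff_C_mul, hrbc, if_pos (by omega)]
      have harg : (((j : ℕ) : ℤ) - ((m - 1 - (i : ℕ) : ℕ) : ℤ)).toNat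
          = (i : ℕ) - (m - 1 - (j : ℕ)) := by omega
      rw [harg]
      have hpv : (∑ s ∈ Finset.range (n + 1),
          c s ((i : ℕ) - (m - 1 - (j : ℕ))) * z ^ s) = p ((i : ℕ) - (m - 1 - (j : ℕ))) := by
        rw [hp]
      rw [hpv]
      simp only [Complex.star_def]
      ring
    · rw [if_neg (by omega), if_neg (by omega)]
      simp
  have hBv : ∀ i : Fin m, (Rt * f).coeff (i : ℕ) = (B *ᵥ x) (Fin.rev i) := by
    intro i
    have hi := i.isLt
    have hrev : ((Fin.rev i : Fin m) : ℕ) = m - 1 - (i : ℕ) := by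
      rw [Fin.val_rev]; omega
    rw [hfdef, Finset.mul_sum, Polynomial.finset_sum_coeff]
    rw [Matrix.mulVec, dotProduct]
    apply Finset.sum_congr rfl
    intro j _
    have hj := j.isLt
    have e1 : Rt * (C (x j) * X ^ (m - 1 - (j : ℕ)))
        = C (x j) * Rt * X ^ (m - 1 - (j : ℕ)) := by ring
    rw [e1, Polynomial.coeff_mul_X_pow', hB]
    rw [hrev]
    rcases le_or_gt (m - 1 - (i : ℕ)) (j : ℕ) with hcond | hcond
    · rw [if_pos (by omega), if_pos (by omega)]
      rw [if_pos (by constructor <;> (push_cast; omega))]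
      rw [Polynomial.coeff_C_mul, hrtc _ (by omega)]
      have harg : ((m : ℤ) - (((j : ℕ) : ℤ) - ((m - 1 - (i : ℕ) : ℕ) : ℤ))).toNat
          = m - ((i : ℕ) - (m - 1 - (j : ℕ))) := by omega
      rw [harg]
      have hpv : (∑ s ∈ Finset.range (n + 1),
          c s (m - ((i : ℕ) - (m - 1 - (j : ℕ)))) * z ^ s)
          = p (m - ((i : ℕ) - (m - 1 - (j : ℕ)))) := by rw [hp]
      rw [hpv]
      ring
    · rw [if_neg (by omega), if_neg (by omega)]
      simp
  -- sums
  have hsum1 : Nn m (rb * f) = ∑ i, Complex.normSq ((Aᴴ *ᵥ x) i) := by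
    rw [Nn_def _ _, ← Fin.sum_univ_eq_sum_range (fun t => Complex.normSq ((rb * f).coeff t)) m]
    exact Fintype.sum_bijective Fin.rev Fin.rev_bijective _ _
      (fun i => by rw [hAH i])
  have hsum2 : Nn m (Rt * f) = ∑ i, Complex.normSq ((B *ᵥ x) i) := by
    rw [Nn_def _ _, ← Fin.sum_univ_eq_sum_range (fun t => Complex.normSq ((Rt * f).coeff t)) m]
    exact Fintype.sum_bijective Fin.rev Fin.rev_bijective _ _
      (fun i => by rw [hBv i])
  -- quadratic form
  have hform : dotProduct (star x) ((A * Aᴴ - Bᴴ * B) *ᵥ x)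
      = ((Nn m (rb * f) - Nn m (Rt * f) : ℝ) : ℂ) := by
    rw [Matrix.sub_mulVec, dotProduct_sub]
    have h1 : dotProduct (star x) ((A * Aᴴ) *ᵥ x)
        = dotProduct (star (Aᴴ *ᵥ x)) (Aᴴ *ᵥ x) := by
      rw [← Matrix.mulVec_mulVec, dotProduct_mulVec, Matrix.star_mulVec,
        Matrix.conjTranspose_conjTranspose]
    have h2 : dotProduct (star x) ((Bᴴ * B) *ᵥ x)
        = dotProduct (star (B *ᵥ x)) (B *ᵥ x) := by
      rw [← Matrix.mulVec_mulVec, dotProduct_mulVec, Matrix.star_mulVec]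
    rw [h1, h2, dotStar, dotStar, hsum1, hsum2]
    push_cast
    ring
  rw [hform]
  rw [Complex.zero_lt_real]
  have hcore := core m hm rb hrdeg hstab' f hfne hfdeg
  rw [← hRt] at hcore
  linarith

end
end Statement19Aux
/-- Schur–Cohn test: if p is stable of degree (n,m), then for every z
on the unit circle the m×m matrix T_m(z) = T₁(z)T₁(z)* − T₂(z)*T₂(z) is positive
definite. -/
theorem statement19 (n m : ℕ) (c : ℕ → ℕ → ℂ)
    (hstable : Stable n m c) (hdeg : DegreeNM n m c) :
    ∀ z : ℂ, ‖z‖ = 1 →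
      (T1mat n m c z * (T1mat n m c z)ᴴ - (T2mat n m c z)ᴴ * T2mat n m c z).PosDef := by
  intro z hz
  refine Matrix.posDef_iff_dotProduct_mulVec.mpr ⟨(Matrix.isHermitian_mul_conjTranspose_self _).sub
    (Matrix.isHermitian_conjTranspose_mul_self _), ?_⟩
  intro x hx
  rcases Nat.eq_zero_or_pos m with rfl | hm
  · exact absurd (funext fun i => i.elim0) hx
  · exact Statement19Aux.key n m c (fun z w hz1 hw1 => hstable z w hz1 hw1) z hz hm x hx
      (T1mat n m c z) (T2mat n m c z) (fun i j => rfl) (fun i j => rfl)
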